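/- If covariates are independent, then E[(m(X) - m(X_{π_j}))^2] = 2·E[Var(m(X)|X^{(-j)})], i.e., the permutation MDA limit equals twice the unnormalized total Sobol index. -/

import Mathlib

open MeasureTheory ProbabilityTheory
open scoped ENNReal NNReal

noncomputable section

lemma sq_integral_le_integral_sq {α : Type*} [MeasurableSpace α] {μ : Measure α}
    [IsProbabilityMeasure μ] {f : α → ℝ} (h1 : Integrable f μ)
    (h2 : Integrable (fun x => f x ^ 2) μ) :
    (∫ x, f x ∂μ) ^ 2 ≤ ∫ x, f x ^ 2 ∂μ := by
  set c := ∫ x, f x ∂μ with hc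
  have hI2 : Integrable (fun x => 2 * c * f x) μ := h1.const_mul _
  have hI1 : Integrable (fun x => f x ^ 2 - 2 * c * f x) μ := h2.sub hI2
  have h0 : 0 ≤ ∫ x, (f x - c) ^ 2 ∂μ := integral_nonneg fun x => sq_nonneg _
  have hrw : ∀ x, (f x - c) ^ 2 = (f x ^ 2 - 2 * c * f x) + c ^ 2 := by
    intro x; ring
  simp_rw [hrw] at h0
  rw [integral_add hI1 (integrable_const _), integral_sub h2 hI2, integral_const_mul,
    integral_const, probReal_univ] at h0
  simp only [ENNReal.toReal_one, one_smul, ← hc] at h0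
  nlinarith

lemma l2_mul_integrable {α : Type*} [MeasurableSpace α] {μ : Measure α} {f g : α → ℝ}
    (hf : MemLp f 2 μ) (hg : MemLp g 2 μ) : Integrable (fun x => f x * g x) μ := by
  have h2f := hf.integrable_sq
  have h2g := hg.integrable_sq
  refine Integrable.mono' ((h2f.add h2g).const_mul (1 / 2))
    (hf.aestronglyMeasurable.mul hg.aestronglyMeasurable) (ae_of_all _ fun x => ?_)
  rw [Real.norm_eq_abs, abs_mul]
  simp only [Pi.add_apply]
  nlinarith [sq_nonneg (|f x| - |g x|), sq_abs (f x), sq_abs (g x),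
    abs_nonneg (f x), abs_nonneg (g x)]

lemma map_update_pi {p : ℕ} (j : Fin p) (μi : Fin p → Measure ℝ)
    [∀ i, IsProbabilityMeasure (μi i)] :
    Measure.map (fun z : (Fin p → ℝ) × ℝ => Function.update z.1 j z.2)
      ((Measure.pi μi).prod (μi j)) = Measure.pi μi := by
  classical
  refine (Measure.pi_eq fun s hs => ?_).symm
  rw [Measure.map_apply measurable_update' (MeasurableSet.univ_pi hs)]
  set s' : Fin p → Set ℝ := fun i => if i = j then Set.univ else s i with hs'
  have hpre : (fun z : (Fin p → ℝ) × ℝ => Function.update z.1 j z.2) ⁻¹' Set.univ.pi s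
      = (Set.univ.pi s') ×ˢ (s j) := by
    ext ⟨y, t⟩
    simp only [Set.mem_preimage, Set.mem_pi, Set.mem_univ, forall_true_left, Set.mem_prod,
      Function.update_apply, hs']
    constructor
    · intro h
      refine ⟨fun i => ?_, by simpa using h j⟩
      by_cases hi : i = j <;> simp [hi] <;> simpa [hi] using h i
    · rintro ⟨h1, h2⟩ i
      by_cases hi : i = j
      · simpa [hi] using h2
      · simpa [hi] using h1 i
  rw [hpre, Measure.prod_prod, Measure.pi_pi]
  have h1 : ∏ i, (μi i) (s' i) = ∏ i ∈ Finset.univ.erase j, (μi i) (s i) := by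
    rw [← Finset.mul_prod_erase Finset.univ _ (Finset.mem_univ j)]
    simp only [hs', if_pos rfl, measure_univ, one_mul]
    exact Finset.prod_congr rfl fun i hi => by
      simp [Finset.mem_erase.1 hi |>.1]
  rw [h1, ← Finset.mul_prod_erase Finset.univ (fun i => (μi i) (s i)) (Finset.mem_univ j),
    mul_comm]

lemma map_eq_pi_of_iIndep {Ω : Type*} [MeasureSpace Ω] [IsProbabilityMeasure (ℙ : Measure Ω)]
    {p : ℕ} (X : Ω → Fin p → ℝ) (hX : Measurable X)
    (hiIndep : iIndepFun (fun i ω => X ω i) ℙ) :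
    Measure.map X ℙ = Measure.pi (fun i => Measure.map (fun ω => X ω i) ℙ) := by
  haveI : ∀ i, IsProbabilityMeasure (Measure.map (fun ω => X ω i) ℙ) := fun i =>
    Measure.isProbabilityMeasure_map ((measurable_pi_apply i).comp hX).aemeasurable
  refine (Measure.pi_eq fun s hs => ?_).symm
  rw [Measure.map_apply hX (MeasurableSet.univ_pi hs)]
  have hpre : X ⁻¹' Set.univ.pi s = ⋂ i ∈ Finset.univ, (fun ω => X ω i) ⁻¹' s i := by
    ext ω; simp [Set.mem_pi]
  rw [hpre, (iIndepFun_iff_measure_inter_preimage_eq_mul.1 hiIndep) Finset.univ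
    (fun i _ => hs i)]
  exact Finset.prod_congr rfl fun i _ =>
    (Measure.map_apply ((measurable_pi_apply i).comp hX) (hs i)).symm

/-- The σ-algebra generated by the components of `X` other than the `j`-th. -/
def sigmaWithout {Ω : Type*} [MeasurableSpace Ω] {p : ℕ} (X : Ω → Fin p → ℝ) (j : Fin p) :
    MeasurableSpace Ω :=
  MeasurableSpace.comap (fun ω => fun k : {k : Fin p // k ≠ j} => X ω (k : Fin p)) inferInstance

/-- `X_{π_j}` : the vector `X` with its `j`-th component replaced by `X'`. -/
def permuted {Ω : Type*} {p : ℕ} (X : Ω → Fin p → ℝ) (j : Fin p) (X' : Ω → ℝ) :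
    Ω → Fin p → ℝ :=
  fun ω => Function.update (X ω) j (X' ω)

/-- If the covariates are independent, the permutation MDA limit equals twice the
unnormalized total Sobol index: `E[(m(X) - m(X_{π_j}))²] = 2 E[Var(m(X)|X^{(-j)})]`. -/
theorem mda_limit_indep
    {Ω : Type*} [MeasureSpace Ω] [IsProbabilityMeasure (ℙ : Measure Ω)]
    {p : ℕ} (j : Fin p) (X : Ω → Fin p → ℝ) (X' : Ω → ℝ)
    (m : (Fin p → ℝ) → ℝ) (hmMeas : Measurable m)
    (hL2 : MemLp (fun ω => m (X ω)) 2 ℙ)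
    (hX : Measurable X) (hX' : Measurable X')
    -- the components of `X` are mutually independent
    (hiIndep : iIndepFun (fun i ω => X ω i) ℙ)
    -- `X'` is an independent copy of the `j`-th component of `X`
    (hcopy : Measure.map X' ℙ = Measure.map (fun ω => X ω j) ℙ)
    (hindep : IndepFun X' X ℙ) :
    ∫ ω, (m (X ω) - m (permuted X j X' ω)) ^ 2 ∂ℙ
      = 2 * ∫ ω, (m (X ω) - (ℙ[fun ω' => m (X ω') | sigmaWithout X j]) ω) ^ 2 ∂ℙ := by
  classical
  -- basic objects
  set μi : Fin p → Measure ℝ := fun i => Measure.map (fun ω => X ω i) ℙ with hμidef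
  haveI : ∀ i, IsProbabilityMeasure (μi i) := fun i =>
    Measure.isProbabilityMeasure_map ((measurable_pi_apply i).comp hX).aemeasurable
  set ν : Measure (Fin p → ℝ) := Measure.map X ℙ with hνdef
  haveI : IsProbabilityMeasure ν := Measure.isProbabilityMeasure_map hX.aemeasurable
  set μj : Measure ℝ := μi j with hμjdef
  set κ : Measure ((Fin p → ℝ) × ℝ) := ν.prod μj with hκdef
  haveI : IsProbabilityMeasure κ := by rw [hκdef]; infer_instance
  set u : (Fin p → ℝ) × ℝ → (Fin p → ℝ) := fun z => Function.update z.1 j z.2 with hudef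
  have hu : Measurable u := measurable_update'
  -- ν is the product measure, and u is measure preserving κ → ν
  have hν_pi : ν = Measure.pi μi := map_eq_pi_of_iIndep X hX hiIndep
  have hmapu : Measure.map u κ = ν := by
    rw [hκdef, hν_pi, hμjdef]; exact map_update_pi j μi
  -- joint law of (X, X') is κ
  have hjoint : Measure.map (fun ω => (X ω, X' ω)) ℙ = κ := by
    rw [(indepFun_iff_map_prod_eq_prod_map_map hX.aemeasurable hX'.aemeasurable).1 hindep.symm,
      hcopy]
  -- the projection forgetting the j-th coordinate
  set π : (Fin p → ℝ) → ({k : Fin p // k ≠ j} → ℝ) := fun x k => x k with hπdef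
  have hπ : Measurable π := measurable_pi_lambda _ fun k => measurable_pi_apply _
  -- reconstruction and the conditional-mean function g
  set recon : (({k : Fin p // k ≠ j} → ℝ) × ℝ) → (Fin p → ℝ) :=
    fun z i => if h : i = j then z.2 else z.1 ⟨i, h⟩ with hrecondef
  have hrecon : Measurable recon := by
    refine measurable_pi_lambda _ fun i => ?_
    by_cases h : i = j <;> simp only [hrecondef, h, dif_pos, dif_neg, not_false_iff]
    · exact measurable_snd
    · exact (measurable_pi_apply _).comp measurable_fst
  have hrecon_pi : ∀ (x : Fin p → ℝ) (t : ℝ), recon (π x, t) = Function.update x j t := by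
    intro x t; funext i
    by_cases h : i = j <;> simp [hrecondef, hπdef, h, Function.update_apply]
  set G : ({k : Fin p // k ≠ j} → ℝ) → ℝ := fun z => ∫ t, m (recon (z, t)) ∂μj with hGdef
  have hG : StronglyMeasurable G :=
    StronglyMeasurable.integral_prod_right' (hmMeas.comp hrecon).stronglyMeasurable
  set g : (Fin p → ℝ) → ℝ := fun x => G (π x) with hgdef'
  have hgMeas : Measurable g := hG.measurable.comp hπ
  have hgdef : ∀ x, g x = ∫ t, m (Function.update x j t) ∂μj := by
    intro x
    simp only [hgdef', hGdef]
    exact integral_congr_ae (ae_of_all _ fun t => show m (recon (π x, t)) = m (Function.update x j t) by rw [hrecon_pi])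
  have hπu : ∀ (y : Fin p → ℝ) (s : ℝ), π (Function.update y j s) = π y := by
    intro y s; funext k
    simp [hπdef, Function.update_apply, k.2]
  have hgu : ∀ (y : Fin p → ℝ) (s : ℝ), g (Function.update y j s) = g y := by
    intro y s; simp only [hgdef', hπu]
  -- transfer of MemLp
  have hmν : MemLp m 2 ν :=
    (memLp_map_measure_iff hmMeas.aestronglyMeasurable hX.aemeasurable).2 hL2
  have hmu_κ : MemLp (fun z => m (u z)) 2 κ := by
    have := (memLp_map_measure_iff hmMeas.aestronglyMeasurable hu.aemeasurable).1
      (by rw [hmapu]; exact hmν)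
    exact this
  have hfstκ : Measure.map Prod.fst κ = ν := by
    rw [hκdef, Measure.map_fst_prod, measure_univ, one_smul]
  have hm1_κ : MemLp (fun z : (Fin p → ℝ) × ℝ => m z.1) 2 κ := by
    have := (memLp_map_measure_iff hmMeas.aestronglyMeasurable measurable_fst.aemeasurable).1
      (by rw [hfstκ]; exact hmν)
    exact this
  have hInt_mu : Integrable (fun z => m (u z)) κ := hmu_κ.integrable one_le_two
  -- g is integrable and in L²(ν)
  have hg1 : Integrable g ν := by
    have h := hInt_mu.integral_prod_left
    refine h.congr (ae_of_all _ fun x => ?_)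
    rw [hgdef x]
  have hInt_mu2 : Integrable (fun z => (m (u z)) ^ 2) κ := hmu_κ.integrable_sq
  have hg2 : MemLp g 2 ν := by
    rw [memLp_two_iff_integrable_sq hgMeas.aestronglyMeasurable]
    have hbound : Integrable (fun x => ∫ t, (m (u (x, t))) ^ 2 ∂μj) ν :=
      hInt_mu2.integral_prod_left
    have hae2 : ∀ᵐ x ∂ν, Integrable (fun t => (m (u (x, t))) ^ 2) μj :=
      hInt_mu2.prod_right_ae
    have hae1 : ∀ᵐ x ∂ν, Integrable (fun t => m (u (x, t))) μj :=
      hInt_mu.prod_right_ae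
    refine Integrable.mono' hbound (hgMeas.pow_const 2).aestronglyMeasurable ?_
    filter_upwards [hae1, hae2] with x h1 h2
    rw [Real.norm_eq_abs, abs_of_nonneg (sq_nonneg _), hgdef x]
    exact sq_integral_le_integral_sq h1 h2
  have hg1κ : MemLp (fun z : (Fin p → ℝ) × ℝ => g z.1) 2 κ := by
    have := (memLp_map_measure_iff hgMeas.aestronglyMeasurable measurable_fst.aemeasurable).1
      (by rw [hfstκ]; exact hg2)
    exact this
  -- key integral identity : ∫ m * g dν = ∫ g ^ 2 dν
  have hJ : ∫ x, m x * g x ∂ν = ∫ x, g x ^ 2 ∂ν := by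
    have h1 : ∫ x, m x * g x ∂ν = ∫ z, m (u z) * g (u z) ∂κ := by
      rw [← hmapu]
      exact integral_map hu.aemeasurable
        ((hmMeas.mul hgMeas).aestronglyMeasurable)
    have h2 : ∀ z : (Fin p → ℝ) × ℝ, g (u z) = g z.1 := fun z => hgu z.1 z.2
    have h3 : ∫ z, m (u z) * g (u z) ∂κ = ∫ z : (Fin p → ℝ) × ℝ, m (u z) * g z.1 ∂κ :=
      integral_congr_ae (ae_of_all _ fun z => show m (u z) * g (u z) = m (u z) * g z.1 by rw [h2])
    have h4 : Integrable (fun z : (Fin p → ℝ) × ℝ => m (u z) * g z.1) κ :=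
      l2_mul_integrable hmu_κ hg1κ
    rw [h1, h3, hκdef, integral_prod _ (by rw [← hκdef]; exact h4)]
    have h5 : ∀ y, ∫ t, m (u (y, t)) * g y ∂μj = g y * g y := by
      intro y
      rw [integral_mul_const, ← hgdef y]
    simp_rw [h5]
    refine integral_congr_ae (ae_of_all _ fun y => ?_)
    ring

  -- set-integral identity over ν
  have hsetν : ∀ A : Set ({k : Fin p // k ≠ j} → ℝ), MeasurableSet A →
      ∫ x in π ⁻¹' A, g x ∂ν = ∫ x in π ⁻¹' A, m x ∂ν := by
    intro A hA
    have hB : MeasurableSet (π ⁻¹' A) := hπ hA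
    have h1 : ∫ x in π ⁻¹' A, m x ∂ν = ∫ z in u ⁻¹' (π ⁻¹' A), m (u z) ∂κ := by
      rw [← hmapu]
      exact setIntegral_map hB hmMeas.aestronglyMeasurable hu.aemeasurable
    have hpreA : u ⁻¹' (π ⁻¹' A) = (π ⁻¹' A) ×ˢ (Set.univ : Set ℝ) := by
      ext ⟨y, t⟩
      simp only [Set.mem_preimage, Set.mem_prod, Set.mem_univ, and_true]
      rw [show u (y, t) = Function.update y j t from rfl, hπu]
    have hrestr : κ.restrict ((π ⁻¹' A) ×ˢ (Set.univ : Set ℝ))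
        = (ν.restrict (π ⁻¹' A)).prod μj := by
      rw [hκdef, ← Measure.prod_restrict, Measure.restrict_univ]
    have hIntr : Integrable (fun z => m (u z)) ((ν.restrict (π ⁻¹' A)).prod μj) := by
      rw [← hrestr]; exact hInt_mu.restrict
    rw [h1, hpreA]
    show _ = ∫ z, m (u z) ∂(κ.restrict ((π ⁻¹' A) ×ˢ (Set.univ : Set ℝ)))
    rw [hrestr, integral_prod _ hIntr]
    refine integral_congr_ae (ae_of_all _ fun y => ?_)
    rw [hgdef y]
  -- conditional expectation is g ∘ X
  have hm_le : sigmaWithout X j ≤ (inferInstance : MeasurableSpace Ω) :=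
    Measurable.comap_le (hπ.comp hX)
  have hYint : Integrable (fun ω => m (X ω)) ℙ := hL2.integrable one_le_two
  have hgXint : Integrable (fun ω => g (X ω)) ℙ := by
    have := (integrable_map_measure hgMeas.aestronglyMeasurable hX.aemeasurable).1
      (by rw [← hνdef]; exact hg1)
    exact this
  have hcond : (fun ω => g (X ω)) =ᵐ[ℙ] ℙ[fun ω' => m (X ω') | sigmaWithout X j] := by
    refine ae_eq_condExp_of_forall_setIntegral_eq hm_le hYint
      (fun s _ _ => hgXint.integrableOn) ?_ ?_
    · intro s hs _
      obtain ⟨A, hA, rfl⟩ := hs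
      have e1 : (fun ω => fun k : {k : Fin p // k ≠ j} => X ω (k : Fin p)) ⁻¹' A
          = X ⁻¹' (π ⁻¹' A) := rfl
      rw [e1]
      have e2 : ∫ ω in X ⁻¹' (π ⁻¹' A), g (X ω) ∂ℙ = ∫ x in π ⁻¹' A, g x ∂ν := by
        rw [hνdef]
        exact (setIntegral_map (hπ hA) hgMeas.aestronglyMeasurable hX.aemeasurable).symm
      have e3 : ∫ ω in X ⁻¹' (π ⁻¹' A), m (X ω) ∂ℙ = ∫ x in π ⁻¹' A, m x ∂ν := by
        rw [hνdef]
        exact (setIntegral_map (hπ hA) hmMeas.aestronglyMeasurable hX.aemeasurable).symm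
      rw [e2, e3, hsetν A hA]
    · have hVmeas : Measurable[sigmaWithout X j]
          (fun ω => fun k : {k : Fin p // k ≠ j} => X ω (k : Fin p)) :=
        comap_measurable _
      exact (hG.comp_measurable hVmeas).aestronglyMeasurable

  -- transfers of the various second moments
  have hpair : AEMeasurable (fun ω => (X ω, X' ω)) ℙ := (hX.prodMk hX').aemeasurable
  have hZmem : MemLp (fun ω => m (permuted X j X' ω)) 2 ℙ := by
    have := (memLp_map_measure_iff (hmMeas.comp hu).aestronglyMeasurable hpair).1
      (by rw [hjoint]; exact hmu_κ)
    exact this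
  have hgXmem : MemLp (fun ω => g (X ω)) 2 ℙ := by
    have := (memLp_map_measure_iff hgMeas.aestronglyMeasurable hX.aemeasurable).1
      (by rw [← hνdef]; exact hg2)
    exact this
  have e1 : ∫ ω, (m (X ω)) ^ 2 ∂ℙ = ∫ x, m x ^ 2 ∂ν := by
    rw [hνdef]
    exact (integral_map hX.aemeasurable (hmMeas.pow_const 2).aestronglyMeasurable).symm
  have e2 : ∫ ω, (m (permuted X j X' ω)) ^ 2 ∂ℙ = ∫ x, m x ^ 2 ∂ν := by
    have a : ∫ ω, (m (permuted X j X' ω)) ^ 2 ∂ℙ = ∫ z, (m (u z)) ^ 2 ∂κ := by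
      rw [← hjoint]
      exact (integral_map hpair ((hmMeas.comp hu).pow_const 2).aestronglyMeasurable).symm
    have b : ∫ z, (m (u z)) ^ 2 ∂κ = ∫ x, m x ^ 2 ∂ν := by
      rw [← hmapu]
      exact (integral_map hu.aemeasurable (hmMeas.pow_const 2).aestronglyMeasurable).symm
    rw [a, b]
  have e3 : ∫ ω, m (X ω) * m (permuted X j X' ω) ∂ℙ = ∫ x, g x ^ 2 ∂ν := by
    have a : ∫ ω, m (X ω) * m (permuted X j X' ω) ∂ℙ
        = ∫ z : (Fin p → ℝ) × ℝ, m z.1 * m (u z) ∂κ := by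
      rw [← hjoint]
      exact (integral_map hpair
        ((hmMeas.comp measurable_fst).mul (hmMeas.comp hu)).aestronglyMeasurable).symm
    have hint : Integrable (fun z : (Fin p → ℝ) × ℝ => m z.1 * m (u z)) κ :=
      l2_mul_integrable hm1_κ hmu_κ
    have b : ∫ z : (Fin p → ℝ) × ℝ, m z.1 * m (u z) ∂κ = ∫ x, m x * g x ∂ν := by
      rw [hκdef, integral_prod _ (by rw [← hκdef]; exact hint)]
      refine integral_congr_ae (ae_of_all _ fun x => ?_)
      show ∫ t, m x * m (u (x, t)) ∂μj = m x * g x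
      rw [integral_const_mul, hgdef x]
    rw [a, b, hJ]
  have e4 : ∫ ω, (g (X ω)) ^ 2 ∂ℙ = ∫ x, g x ^ 2 ∂ν := by
    rw [hνdef]
    exact (integral_map hX.aemeasurable (hgMeas.pow_const 2).aestronglyMeasurable).symm
  have e5 : ∫ ω, m (X ω) * g (X ω) ∂ℙ = ∫ x, g x ^ 2 ∂ν := by
    have a : ∫ ω, m (X ω) * g (X ω) ∂ℙ = ∫ x, m x * g x ∂ν := by
      rw [hνdef]
      exact (integral_map hX.aemeasurable (hmMeas.mul hgMeas).aestronglyMeasurable).symm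
    rw [a, hJ]
  -- integrability over Ω
  have hY2 : Integrable (fun ω => (m (X ω)) ^ 2) ℙ := hL2.integrable_sq
  have hZ2 : Integrable (fun ω => (m (permuted X j X' ω)) ^ 2) ℙ := hZmem.integrable_sq
  have hYZ : Integrable (fun ω => m (X ω) * m (permuted X j X' ω)) ℙ :=
    l2_mul_integrable hL2 hZmem
  have hgX2 : Integrable (fun ω => (g (X ω)) ^ 2) ℙ := hgXmem.integrable_sq
  have hYgX : Integrable (fun ω => m (X ω) * g (X ω)) ℙ := l2_mul_integrable hL2 hgXmem
  -- expansion of the left-hand side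
  have hLHS : ∫ ω, (m (X ω) - m (permuted X j X' ω)) ^ 2 ∂ℙ
      = ∫ x, m x ^ 2 ∂ν + ∫ x, m x ^ 2 ∂ν - 2 * ∫ x, g x ^ 2 ∂ν := by
    have hrw : ∀ ω, (m (X ω) - m (permuted X j X' ω)) ^ 2
        = ((m (X ω)) ^ 2 - 2 * (m (X ω) * m (permuted X j X' ω)))
            + (m (permuted X j X' ω)) ^ 2 := fun ω => by ring
    simp_rw [hrw]
    have hI2 : Integrable (fun ω => 2 * (m (X ω) * m (permuted X j X' ω))) ℙ :=
      hYZ.const_mul 2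
    have hI1 : Integrable
        (fun ω => (m (X ω)) ^ 2 - 2 * (m (X ω) * m (permuted X j X' ω))) ℙ := hY2.sub hI2
    rw [integral_add hI1 hZ2, integral_sub hY2 hI2,
      integral_const_mul, e1, e2, e3]
    ring
  -- expansion of the right-hand side
  have hcongr : ∫ ω, (m (X ω) - (ℙ[fun ω' => m (X ω') | sigmaWithout X j]) ω) ^ 2 ∂ℙ
      = ∫ ω, (m (X ω) - g (X ω)) ^ 2 ∂ℙ := by
    refine integral_congr_ae ?_
    filter_upwards [hcond] with ω h
    rw [← h]
  have hRHS : ∫ ω, (m (X ω) - g (X ω)) ^ 2 ∂ℙ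
      = ∫ x, m x ^ 2 ∂ν - ∫ x, g x ^ 2 ∂ν := by
    have hrw : ∀ ω, (m (X ω) - g (X ω)) ^ 2
        = ((m (X ω)) ^ 2 - 2 * (m (X ω) * g (X ω))) + (g (X ω)) ^ 2 := fun ω => by ring
    simp_rw [hrw]
    have hI2 : Integrable (fun ω => 2 * (m (X ω) * g (X ω))) ℙ := hYgX.const_mul 2
    have hI1 : Integrable (fun ω => (m (X ω)) ^ 2 - 2 * (m (X ω) * g (X ω))) ℙ := hY2.sub hI2
    rw [integral_add hI1 hgX2, integral_sub hY2 hI2,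
      integral_const_mul, e1, e4, e5]
    ring
  rw [hcongr, hLHS, hRHS]
  ring
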